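/- The quadratic inequality n(k-d)/(k(n-d)) · C(k,d)C(n-d,d)C(n-d,k-d) · x²/C(n,k) - (2kn-dk-dn)/(k(n-d)) · C(n-d-1,k-d-1)C(n-d,d)C(k,d) · x + C(n-d-1,k-d-1)²C(n,d)C(n-d,d) > 0 is equivalent, for real x and integers k > d ≥ 1, n ≥ 2k, to (x - C(n-1,k-1))·(x - C(n-d-1,k-d-1)·C(n,d)/C(k,d)) > 0 up to multiplication by a positive constant; in particular the quadratic has roots C(n-1,k-1) and C(n-d-1,k-d-1)·C(n,d)/C(k,d). -/

import Mathlib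

theorem stmt_19 (n k d : ℕ) (hd : 1 ≤ d) (hdk : d < k) (hn : 2 * k ≤ n) :
    ∃ c : ℝ, 0 < c ∧ ∀ x : ℝ,
      ((n : ℝ) * ((k : ℝ) - d) / ((k : ℝ) * ((n : ℝ) - d))) *
          ((Nat.choose k d : ℝ) * (Nat.choose (n - d) d : ℝ) *
            (Nat.choose (n - d) (k - d) : ℝ)) * x ^ 2 / (Nat.choose n k : ℝ) -
        ((2 * (k : ℝ) * n - (d : ℝ) * k - (d : ℝ) * n) / ((k : ℝ) * ((n : ℝ) - d))) *
          ((Nat.choose (n - d - 1) (k - d - 1) : ℝ) * (Nat.choose (n - d) d : ℝ) *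
            (Nat.choose k d : ℝ)) * x +
        (Nat.choose (n - d - 1) (k - d - 1) : ℝ) ^ 2 * (Nat.choose n d : ℝ) *
          (Nat.choose (n - d) d : ℝ) =
      c * (x - (Nat.choose (n - 1) (k - 1) : ℝ)) *
        (x - (Nat.choose (n - d - 1) (k - d - 1) : ℝ) * (Nat.choose n d : ℝ) /
          (Nat.choose k d : ℝ)) := by
  have hk1 : 1 ≤ k := le_of_lt (lt_of_le_of_lt hd hdk)
  have hkn : k ≤ n := le_trans (by omega) hn
  have hdn : d ≤ n := le_trans (le_of_lt hdk) hkn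
  have hkd_le : k - d ≤ n - d := by omega
  have hd_le : d ≤ n - d := by omega
  -- casts
  have hnd : ((n - d : ℕ) : ℝ) = (n : ℝ) - d := by
    push_cast [hdn]; ring
  have hkd : ((k - d : ℕ) : ℝ) = (k : ℝ) - d := by
    push_cast [le_of_lt hdk]; ring
  -- positivity of all binomials
  have p1 : 0 < (Nat.choose k d : ℝ) := by
    exact_mod_cast Nat.choose_pos (le_of_lt hdk)
  have p2 : 0 < (Nat.choose (n - d) d : ℝ) := by exact_mod_cast Nat.choose_pos hd_le
  have p3 : 0 < (Nat.choose (n - d) (k - d) : ℝ) := by exact_mod_cast Nat.choose_pos hkd_le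
  have p4 : 0 < (Nat.choose n k : ℝ) := by exact_mod_cast Nat.choose_pos hkn
  have p5 : 0 < (Nat.choose n d : ℝ) := by exact_mod_cast Nat.choose_pos hdn
  have hkpos : (0 : ℝ) < k := by exact_mod_cast hk1
  have hnpos : (0 : ℝ) < n := by exact_mod_cast (by omega : 0 < n)
  have hknd : (0 : ℝ) < (k : ℝ) - d := by
    have : (d : ℝ) < k := by exact_mod_cast hdk
    linarith
  have hnnd : (0 : ℝ) < (n : ℝ) - d := by
    have : (d : ℝ) < n := by exact_mod_cast lt_of_lt_of_le hdk hkn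
    linarith
  -- key identities
  have i1 : (n : ℝ) * (Nat.choose (n - 1) (k - 1) : ℝ) = (Nat.choose n k : ℝ) * k := by
    have := Nat.add_one_mul_choose_eq (n - 1) (k - 1)
    rw [(by omega : n - 1 + 1 = n), (by omega : k - 1 + 1 = k)] at this
    exact_mod_cast this
  have i2 : ((n : ℝ) - d) * (Nat.choose (n - d - 1) (k - d - 1) : ℝ)
      = (Nat.choose (n - d) (k - d) : ℝ) * ((k : ℝ) - d) := by
    have hkd1 : 1 ≤ k - d := by omega
    have hnd1 : 1 ≤ n - d := by omega
    have := Nat.add_one_mul_choose_eq (n - d - 1) (k - d - 1)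
    rw [(by omega : n - d - 1 + 1 = n - d), (by omega : k - d - 1 + 1 = k - d)] at this
    rw [← hnd, ← hkd]
    exact_mod_cast this
  have i3 : (Nat.choose n k : ℝ) * (Nat.choose k d : ℝ)
      = (Nat.choose n d : ℝ) * (Nat.choose (n - d) (k - d) : ℝ) := by
    exact_mod_cast Nat.choose_mul (n := n) (le_of_lt hdk)
  refine ⟨(n : ℝ) * ((k : ℝ) - d) / ((k : ℝ) * ((n : ℝ) - d)) *
      ((Nat.choose k d : ℝ) * (Nat.choose (n - d) d : ℝ) *
        (Nat.choose (n - d) (k - d) : ℝ)) / (Nat.choose n k : ℝ), by positivity, ?_⟩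
  intro x
  have e1 : (Nat.choose (n - 1) (k - 1) : ℝ) = (Nat.choose n k : ℝ) * k / n := by
    field_simp; linarith [i1]
  have e2 : (Nat.choose (n - d - 1) (k - d - 1) : ℝ)
      = (Nat.choose (n - d) (k - d) : ℝ) * ((k : ℝ) - d) / ((n : ℝ) - d) := by
    field_simp; linarith [i2]
  have e3 : (Nat.choose n d : ℝ)
      = (Nat.choose n k : ℝ) * (Nat.choose k d : ℝ) / (Nat.choose (n - d) (k - d) : ℝ) := by
    field_simp; linarith [i3]
  rw [e1, e2, e3]
  field_simp
  ring
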